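/- Under Assumptions A, for every h in the closed ball B(f, ρ) (where ρ = (1−q)R/m), the map T(u) = u − Q(F(u) − h) maps the closed ball B(y, R) into itself: if ‖u − y‖ ≤ R then ‖T(u) − y‖ ≤ R. -/
import Mathlib


open Metric Set Filter

theorem stmt_2
    {H : Type*} [NormedAddCommGroup H] [InnerProductSpace ℝ H] [CompleteSpace H]
    (F : H → H) (F' : H → H →L[ℝ] H) (y f : H) (R m q : ℝ)
    (hf : F y = f) (hR : 0 < R)
    (hdiff : ∀ u ∈ closedBall y R, HasFDerivAt F (F' u) u)
    (Q : H →L[ℝ] H)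
    (hQl : Q.comp (F' y) = ContinuousLinearMap.id ℝ H)
    (hQr : (F' y).comp Q = ContinuousLinearMap.id ℝ H)
    (hm : 0 < m) (hQm : ‖Q‖ ≤ m)
    (ω : ℝ → ℝ)
    (hωcont : ContinuousOn ω (Icc 0 (2 * R)))
    (hωmono : StrictMonoOn ω (Icc 0 (2 * R)))
    (hω0 : ω 0 = 0)
    (hωF : ∀ u ∈ closedBall y R, ∀ v ∈ closedBall y R, ‖F' u - F' v‖ ≤ ω ‖u - v‖)
    (hq : m * ω R = q) (hq0 : 0 < q) (hq1 : q < 1)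
    (ρ : ℝ) (hρ : ρ = (1 - q) * R / m)
    (h : H) (hh : h ∈ closedBall f ρ) :
    ∀ u : H, ‖u - y‖ ≤ R → ‖(u - Q (F u - h)) - y‖ ≤ R := by
  intro u hu
  have huB : u ∈ closedBall y R := by
    simpa [mem_closedBall, dist_eq_norm] using hu
  have hyB : y ∈ closedBall y R := mem_closedBall_self hR.le
  -- The map G v = F v - F' y v has derivative F' v - F' y, of norm ≤ ω R on the ball
  have hG : ∀ v ∈ closedBall y R,
      HasFDerivWithinAt (fun w => F w - F' y w) (F' v - F' y) (closedBall y R) v := by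
    intro v hv
    exact ((hdiff v hv).sub ((F' y).hasFDerivAt)).hasFDerivWithinAt
  have hbound : ∀ v ∈ closedBall y R, ‖F' v - F' y‖ ≤ ω R := by
    intro v hv
    have h1 : ‖F' v - F' y‖ ≤ ω ‖v - y‖ := hωF v hv y hyB
    have hvy : ‖v - y‖ ≤ R := by
      simpa [mem_closedBall, dist_eq_norm] using hv
    have hmem1 : ‖v - y‖ ∈ Icc (0:ℝ) (2*R) := ⟨norm_nonneg _, by linarith⟩
    have hmem2 : R ∈ Icc (0:ℝ) (2*R) := ⟨hR.le, by linarith⟩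
    exact h1.trans (hωmono.monotoneOn hmem1 hmem2 hvy)
  have hmvt := (convex_closedBall y R).norm_image_sub_le_of_norm_hasFDerivWithin_le
      hG hbound hyB huB
  -- hmvt : ‖(F u - F' y u) - (F y - F' y y)‖ ≤ ω R * ‖u - y‖
  have hkey : ‖(F u - F' y u) - (F y - F' y y)‖ ≤ ω R * R := by
    refine hmvt.trans ?_
    have hωR : 0 ≤ ω R := by nlinarith [hq0, hm, hq]
    nlinarith [hωR]
  -- rewrite T u - y
  have hQF : ∀ w : H, Q (F' y w) = w := by
    intro w
    have := congrArg (fun L : H →L[ℝ] H => L w) hQl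
    simpa using this
  have hrw : (u - Q (F u - h)) - y
      = -(Q ((F u - F' y u) - (F y - F' y y))) - Q (f - h) := by
    have : Q (F u - h) = Q ((F u - F' y u) - (F y - F' y y)) + Q (F' y (u - y)) + Q (f - h) := by
      rw [← map_add, ← map_add]
      congr 1
      rw [hf]
      simp [map_sub]
      abel
    rw [this, hQF]
    abel
  have hfh : ‖f - h‖ ≤ ρ := by
    have := mem_closedBall.mp hh
    rw [dist_comm] at this
    simpa [dist_eq_norm] using this
  have hρpos : 0 ≤ ρ := by
    have h1 : 0 < 1 - q := by linarith
    rw [hρ]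
    positivity
  calc ‖(u - Q (F u - h)) - y‖
      = ‖-(Q ((F u - F' y u) - (F y - F' y y))) - Q (f - h)‖ := by rw [hrw]
    _ ≤ ‖-(Q ((F u - F' y u) - (F y - F' y y)))‖ + ‖Q (f - h)‖ := norm_sub_le _ _
    _ = ‖Q ((F u - F' y u) - (F y - F' y y))‖ + ‖Q (f - h)‖ := by rw [norm_neg]
    _ ≤ m * (ω R * R) + m * ρ := by
        gcongr
        · exact (Q.le_opNorm _).trans (mul_le_mul hQm hkey (norm_nonneg _) hm.le)
        · exact (Q.le_opNorm _).trans (mul_le_mul hQm hfh (norm_nonneg _) hm.le)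
    _ = R := by
        rw [hρ]
        field_simp
        nlinarith [hq, hm]
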